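/- Let J be the 4×4 block matrix J = [[Π, 0],[0, Δ]] · [[λ_s I, λ_t I],[λ_s I, λ_t I]] where Π is upper triangular with Π = [[T_1(1−μ_{12}) , T_1 μ_{12}],[0, T_2]] and Δ is upper triangular with Δ = [[Δ_{11}, Δ_{12}],[0, Δ_{22}]], λ_s, λ_t > 0. Then the spectral radius of J equals λ_s · max{ T_1(1−μ_{12}) + (λ_t/λ_s) Δ_{11}, T_2 + (λ_t/λ_s) Δ_{22} }, assuming all of T_1(1−μ_{12}), T_2, Δ_{11}, Δ_{22} are nonnegative. -/

import Mathlib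

open Matrix

/-- The spectral radius of a complex square matrix: supremum of the moduli of its
spectrum (eigenvalues). -/
noncomputable def specRad {n : Type*} [Fintype n] [DecidableEq n]
    (A : Matrix n n ℂ) : ℝ :=
  sSup ((fun z : ℂ => ‖z‖) '' spectrum ℂ A)

/-- For the `4×4` Jacobian `J = [[λₛΠ, λₜΠ],[λₛΔ, λₜΔ]]` with upper-triangular
`Π = [[T₁(1−μ₁₂), T₁μ₁₂],[0, T₂]]` and `Δ = [[Δ₁₁, Δ₁₂],[0, Δ₂₂]]`, the spectral
radius equals `λₛ · max{T₁(1−μ₁₂) + (λₜ/λₛ)Δ₁₁, T₂ + (λₜ/λₛ)Δ₂₂}`. -/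
theorem jacobian_spectralRadius_triangular
    (lams lamt T₁ T₂ μ₁₂ Δ₁₁ Δ₁₂ Δ₂₂ : ℝ)
    (hs : 0 < lams) (ht : 0 < lamt)
    (ha : 0 ≤ T₁ * (1 - μ₁₂)) (hb : 0 ≤ T₂) (hd₁ : 0 ≤ Δ₁₁) (hd₂ : 0 ≤ Δ₂₂)
    (J : Matrix (Fin 4) (Fin 4) ℝ)
    (hJ : J = !![lams * (T₁ * (1 - μ₁₂)), lams * (T₁ * μ₁₂),
                   lamt * (T₁ * (1 - μ₁₂)), lamt * (T₁ * μ₁₂);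
                 0, lams * T₂, 0, lamt * T₂;
                 lams * Δ₁₁, lams * Δ₁₂, lamt * Δ₁₁, lamt * Δ₁₂;
                 0, lams * Δ₂₂, 0, lamt * Δ₂₂]) :
    specRad (J.map (Complex.ofReal : ℝ → ℂ)) =
      lams * max (T₁ * (1 - μ₁₂) + (lamt / lams) * Δ₁₁)
                 (T₂ + (lamt / lams) * Δ₂₂) := by
  set a : ℝ := lams * (T₁ * (1 - μ₁₂)) + lamt * Δ₁₁ with hadef
  set b : ℝ := lams * T₂ + lamt * Δ₂₂ with hbdef
  have ha' : 0 ≤ a := add_nonneg (mul_nonneg hs.le ha) (mul_nonneg ht.le hd₁)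
  have hb' : 0 ≤ b := add_nonneg (mul_nonneg hs.le hb) (mul_nonneg ht.le hd₂)
  -- the spectrum
  have key : ∀ z : ℂ, z ∈ spectrum ℂ (J.map (Complex.ofReal : ℝ → ℂ)) ↔
      z = 0 ∨ z = (a : ℂ) ∨ z = (b : ℂ) := by
    intro z
    rw [spectrum.mem_iff, Matrix.isUnit_iff_isUnit_det, isUnit_iff_ne_zero, not_ne_iff,
      Algebra.algebraMap_eq_smul_one]
    have hM : z • (1 : Matrix (Fin 4) (Fin 4) ℂ) - J.map (Complex.ofReal : ℝ → ℂ) =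
        !![z - (lams * (T₁ * (1 - μ₁₂)) : ℝ), -(lams * (T₁ * μ₁₂) : ℝ),
             -(lamt * (T₁ * (1 - μ₁₂)) : ℝ), -(lamt * (T₁ * μ₁₂) : ℝ);
           0, z - (lams * T₂ : ℝ), 0, -(lamt * T₂ : ℝ);
           -(lams * Δ₁₁ : ℝ), -(lams * Δ₁₂ : ℝ), z - (lamt * Δ₁₁ : ℝ), -(lamt * Δ₁₂ : ℝ);
           0, -(lams * Δ₂₂ : ℝ), 0, z - (lamt * Δ₂₂ : ℝ)] := by
      subst hJ
      ext i j
      fin_cases i <;> fin_cases j <;> simp [Matrix.one_apply]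
    rw [hM]
    have hdet : Matrix.det
        !![z - (lams * (T₁ * (1 - μ₁₂)) : ℝ), -(lams * (T₁ * μ₁₂) : ℝ),
             -(lamt * (T₁ * (1 - μ₁₂)) : ℝ), -(lamt * (T₁ * μ₁₂) : ℝ);
           0, z - (lams * T₂ : ℝ), 0, -(lamt * T₂ : ℝ);
           -(lams * Δ₁₁ : ℝ), -(lams * Δ₁₂ : ℝ), z - (lamt * Δ₁₁ : ℝ), -(lamt * Δ₁₂ : ℝ);
           0, -(lams * Δ₂₂ : ℝ), 0, z - (lamt * Δ₂₂ : ℝ)] =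
        z ^ 2 * (z - (a : ℂ)) * (z - (b : ℂ)) := by
      simp only [Matrix.det_succ_row_zero, Fin.sum_univ_succ, Fin.sum_univ_zero,
        Matrix.submatrix_apply, Fin.succAbove, Fin.lt_def, Fin.ext_iff, Fin.castSucc,
        Fin.castAdd, Fin.castLE, Matrix.cons_val', Matrix.cons_val_zero, Matrix.cons_val_one,
        Matrix.head_cons, Matrix.head_fin_const, Matrix.cons_val_fin_one, Matrix.empty_val',
        Fin.val_zero, Fin.val_succ, Matrix.det_unique]
      simp [Fin.succ, Matrix.vecHead, Matrix.vecTail]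
      push_cast [hadef, hbdef]
      norm_num
      ring
    rw [hdet]
    constructor
    · intro h
      rcases mul_eq_zero.mp h with h | h
      · rcases mul_eq_zero.mp h with h | h
        · left; exact pow_eq_zero_iff (by norm_num) |>.mp h
        · right; left; exact sub_eq_zero.mp h
      · right; right; exact sub_eq_zero.mp h
    · rintro (rfl | rfl | rfl) <;> ring
  have hspec : spectrum ℂ (J.map (Complex.ofReal : ℝ → ℂ)) =
      ({0, (a : ℂ), (b : ℂ)} : Set ℂ) := by
    ext z
    rw [key z]
    simp [Set.mem_insert_iff]
  have himg : (fun z : ℂ => ‖z‖) '' ({0, (a : ℂ), (b : ℂ)} : Set ℂ) = ({0, a, b} : Set ℝ) := by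
    rw [Set.image_insert_eq, Set.image_insert_eq, Set.image_singleton]
    simp [Complex.norm_real, abs_of_nonneg ha', abs_of_nonneg hb']
  have hsup : sSup ({0, a, b} : Set ℝ) = max a b := by
    rw [csSup_insert (((Set.finite_singleton b).insert a).bddAbove)
        ⟨a, Set.mem_insert a {b}⟩, csSup_pair]
    exact sup_eq_right.mpr (le_sup_of_le_left ha')
  have hfin : max a b = lams * max (T₁ * (1 - μ₁₂) + (lamt / lams) * Δ₁₁)
      (T₂ + (lamt / lams) * Δ₂₂) := by
    rw [mul_max_of_nonneg _ _ hs.le, hadef, hbdef]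
    congr 1 <;> field_simp <;> ring
  rw [specRad, hspec, himg, hsup, hfin]
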